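/- Let A be an n×n real H-matrix, i.e. its comparison matrix M(A), defined by M(A)_{ii} = |a_{ii}| and M(A)_{ij} = −|a_{ij}| for i ≠ j, is a nonsingular M-matrix. Fix m < n with banded decomposition A = T_m − E_m − F_m, and let 0 < ω ≤ 1. Then T_m − ω E_m is invertible and every complex eigenvalue λ of the GSOR iteration matrix (T_m − ω E_m)⁻¹[(1−ω)T_m + ω F_m] satisfies |λ| < 1 (the generalized SOR method converges for every initial guess). -/

import Mathlib

open Matrix Finset

/-- Auxiliary: a matrix that is strictly diagonally dominant with respect to a
positive weight vector has trivial kernel. -/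
lemma sdd_mulVec_eq_zero {K : Type*} [NormedField K] {n : ℕ}
    (B : Matrix (Fin n) (Fin n) K) (u : Fin n → ℝ) (hu : ∀ i, 0 < u i)
    (hdom : ∀ i, ∑ j ∈ Finset.univ.erase i, ‖B i j‖ * u j < ‖B i i‖ * u i)
    (v : Fin n → K) (hv : B.mulVec v = 0) : v = 0 := by
  by_contra hv0
  obtain ⟨k, hk⟩ := Function.ne_iff.mp hv0
  obtain ⟨i, -, hi⟩ := Finset.exists_max_image Finset.univ (fun i => ‖v i‖ / u i)
    ⟨k, Finset.mem_univ k⟩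
  have hvi : 0 < ‖v i‖ := by
    have h1 : 0 < ‖v k‖ / u k := div_pos (norm_pos_iff.mpr hk) (hu k)
    have h3 : 0 < ‖v i‖ / u i := lt_of_lt_of_le h1 (hi k (Finset.mem_univ k))
    have h4 := mul_pos h3 (hu i)
    rwa [div_mul_cancel₀ _ (hu i).ne'] at h4
  have hmax : ∀ j, ‖v j‖ * u i ≤ ‖v i‖ * u j := by
    intro j
    have := hi j (Finset.mem_univ j)
    rw [div_le_div_iff₀ (hu j) (hu i)] at this
    linarith
  have hrow : ∑ j, B i j * v j = 0 := congrFun hv i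
  rw [← Finset.add_sum_erase _ _ (Finset.mem_univ i)] at hrow
  have hBiv : B i i * v i = -∑ j ∈ Finset.univ.erase i, B i j * v j :=
    eq_neg_of_add_eq_zero_left hrow
  have key : ‖B i i‖ * ‖v i‖ * u i ≤ (∑ j ∈ Finset.univ.erase i, ‖B i j‖ * u j) * ‖v i‖ := by
    calc ‖B i i‖ * ‖v i‖ * u i = ‖B i i * v i‖ * u i := by rw [norm_mul]
      _ ≤ (∑ j ∈ Finset.univ.erase i, ‖B i j * v j‖) * u i := by
          rw [hBiv, norm_neg]
          exact mul_le_mul_of_nonneg_right (norm_sum_le _ _) (hu i).le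
      _ = ∑ j ∈ Finset.univ.erase i, ‖B i j‖ * (‖v j‖ * u i) := by
          rw [Finset.sum_mul]; apply Finset.sum_congr rfl; intro j _
          rw [norm_mul]; ring
      _ ≤ ∑ j ∈ Finset.univ.erase i, ‖B i j‖ * (‖v i‖ * u j) := by
          apply Finset.sum_le_sum; intro j _
          exact mul_le_mul_of_nonneg_left (hmax j) (norm_nonneg _)
      _ = (∑ j ∈ Finset.univ.erase i, ‖B i j‖ * u j) * ‖v i‖ := by
          rw [Finset.sum_mul]; apply Finset.sum_congr rfl; intro j _; ring
  nlinarith [hdom i, hvi]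

/-- Generalized SOR with 0 < ω ≤ 1 converges for H-matrices. -/
theorem gsor_converges_of_Hmatrix (n m : ℕ) (hm : m < n)
    (A MA T E F : Matrix (Fin n) (Fin n) ℝ) (ω : ℝ)
    (hω0 : 0 < ω) (hω1 : ω ≤ 1)
    (hMA : ∀ i j, MA i j = if i = j then |A i i| else -|A i j|)
    (hMAunit : IsUnit MA)
    (hMAinv : ∀ i j, 0 ≤ MA⁻¹ i j)
(hT : ∀ i j, T i j = if |(i : ℤ) - (j : ℤ)| ≤ (m : ℤ) then A i j else 0)
    (hE : ∀ i j, E i j = if (j : ℤ) + (m : ℤ) < (i : ℤ) then -A i j else 0)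
    (hF : ∀ i j, F i j = if (i : ℤ) + (m : ℤ) < (j : ℤ) then -A i j else 0) :
    IsUnit (T - ω • E) ∧
      ∀ (lam : ℂ) (v : Fin n → ℂ), v ≠ 0 →
        (((T - ω • E)⁻¹ * ((1 - ω) • T + ω • F)).map (Complex.ofReal)).mulVec v = lam • v →
        ‖lam‖ < 1 := by
  classical
  have hMAdet : IsUnit MA.det := (Matrix.isUnit_iff_isUnit_det MA).mp hMAunit
  -- construct the positive scaling vector u with MA *ᵥ u = 1
  set u : Fin n → ℝ := MA⁻¹.mulVec (fun _ => 1) with hu_def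
  have hMAu : MA.mulVec u = fun _ => 1 := by
    rw [hu_def, Matrix.mulVec_mulVec, Matrix.mul_nonsing_inv MA hMAdet, Matrix.one_mulVec]
  have hupos : ∀ i, 0 < u i := by
    intro i
    have hsum : u i = ∑ j, MA⁻¹ i j := by simp [hu_def, Matrix.mulVec, dotProduct]
    rw [hsum]
    rcases (Finset.sum_nonneg (fun j _ => hMAinv i j)).lt_or_eq with h | h
    · exact h
    · exfalso
      have hz : ∀ j ∈ Finset.univ, MA⁻¹ i j = 0 :=
        (Finset.sum_eq_zero_iff_of_nonneg (fun j _ => hMAinv i j)).mp h.symm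
      have h1 : MA⁻¹ * MA = 1 := Matrix.nonsing_inv_mul MA hMAdet
      have h2 : (MA⁻¹ * MA) i i = ∑ j, MA⁻¹ i j * MA j i := Matrix.mul_apply
      rw [h1] at h2
      simp only [Matrix.one_apply_eq] at h2
      rw [Finset.sum_eq_zero (fun j hj => by rw [hz j hj, zero_mul])] at h2
      exact one_ne_zero h2
  -- generalized strict diagonal dominance of A
  have hdomA : ∀ i, ∑ j ∈ Finset.univ.erase i, |A i j| * u j < |A i i| * u i := by
    intro i
    have h1 : ∑ j, MA i j * u j = 1 := by
      have := congrFun hMAu i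
      simpa [Matrix.mulVec, dotProduct] using this
    rw [← Finset.add_sum_erase _ _ (Finset.mem_univ i)] at h1
    have h2 : ∑ j ∈ Finset.univ.erase i, MA i j * u j
        = -∑ j ∈ Finset.univ.erase i, |A i j| * u j := by
      rw [← Finset.sum_neg_distrib]
      apply Finset.sum_congr rfl
      intro j hj
      have hji : i ≠ j := (Finset.ne_of_mem_erase hj).symm
      rw [hMA i j, if_neg hji]; ring
    rw [hMA i i, if_pos rfl] at h1
    rw [h2] at h1
    linarith
  -- diagonal and off-diagonal structure of T, E, F
  have hTd : ∀ i : Fin n, T i i = A i i := by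
    intro i; rw [hT i i, if_pos]; simp
  have hEd : ∀ i : Fin n, E i i = 0 := by
    intro i; rw [hE i i, if_neg]; omega
  have hFd : ∀ i : Fin n, F i i = 0 := by
    intro i; rw [hF i i, if_neg]; omega
  -- invertibility of T - ω • E
  have hRdom : ∀ i, ∑ j ∈ Finset.univ.erase i, ‖(T - ω • E) i j‖ * u j
      < ‖(T - ω • E) i i‖ * u i := by
    intro i
    have hdiag : (T - ω • E) i i = A i i := by
      simp [Matrix.sub_apply, Matrix.smul_apply, hTd i, hEd i]
    calc ∑ j ∈ Finset.univ.erase i, ‖(T - ω • E) i j‖ * u j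
        ≤ ∑ j ∈ Finset.univ.erase i, |A i j| * u j := by
          apply Finset.sum_le_sum
          intro j hj
          apply mul_le_mul_of_nonneg_right _ (hupos j).le
          rw [Real.norm_eq_abs, Matrix.sub_apply, Matrix.smul_apply, smul_eq_mul,
            hT i j, hE i j]
          by_cases hb : |(i : ℤ) - (j : ℤ)| ≤ (m : ℤ)
          · rw [if_pos hb, if_neg (by rw [abs_le] at hb; omega)]
            simp
          · rw [if_neg hb]
            rw [abs_le] at hb
            by_cases hc : (j : ℤ) + (m : ℤ) < (i : ℤ)
            · rw [if_pos hc]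
              rw [show (0 : ℝ) - ω * -A i j = ω * A i j by ring, abs_mul, abs_of_pos hω0]
              nlinarith [abs_nonneg (A i j)]
            · rw [if_neg hc]; simp [abs_nonneg]
      _ < |A i i| * u i := hdomA i
      _ = ‖(T - ω • E) i i‖ * u i := by rw [hdiag, Real.norm_eq_abs]
  have hRunit : IsUnit (T - ω • E) := by
    rw [Matrix.isUnit_iff_isUnit_det, isUnit_iff_ne_zero]
    intro hdet
    obtain ⟨v, hv0, hv⟩ := (Matrix.exists_mulVec_eq_zero_iff).mpr hdet
    exact hv0 (sdd_mulVec_eq_zero _ u hupos hRdom v hv)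
  refine ⟨hRunit, ?_⟩
  intro lam v hv0 heig
  by_contra hlam
  push_neg at hlam
  -- complex lifts
  set T' : Matrix (Fin n) (Fin n) ℂ := T.map Complex.ofReal with hT'
  set E' : Matrix (Fin n) (Fin n) ℂ := E.map Complex.ofReal with hE'
  set F' : Matrix (Fin n) (Fin n) ℂ := F.map Complex.ofReal with hF'
  set X : Matrix (Fin n) (Fin n) ℝ := T - ω • E with hX
  have hXdet : IsUnit X.det := (Matrix.isUnit_iff_isUnit_det X).mp hRunit
  have hmul : (X.map Complex.ofReal) * ((X⁻¹ * ((1 - ω) • T + ω • F)).map Complex.ofReal)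
      = ((1 - ω) • T + ω • F).map Complex.ofReal := by
    have := (Matrix.map_mul (L := X) (M := X⁻¹ * ((1 - ω) • T + ω • F))
      (f := Complex.ofRealHom)).symm
    rw [show ⇑Complex.ofRealHom = Complex.ofReal from rfl] at this
    rw [this, ← mul_assoc, Matrix.mul_nonsing_inv X hXdet, one_mul]
  have h2 : (((1 - ω) • T + ω • F).map Complex.ofReal).mulVec v
      = lam • ((X.map Complex.ofReal).mulVec v) := by
    calc (((1 - ω) • T + ω • F).map Complex.ofReal).mulVec v
        = ((X.map Complex.ofReal) * ((X⁻¹ * ((1 - ω) • T + ω • F)).map Complex.ofReal)).mulVec v := by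
          rw [hmul]
      _ = (X.map Complex.ofReal).mulVec
          (((X⁻¹ * ((1 - ω) • T + ω • F)).map Complex.ofReal).mulVec v) := by
          rw [← Matrix.mulVec_mulVec]
      _ = (X.map Complex.ofReal).mulVec (lam • v) := by rw [heig]
      _ = lam • (X.map Complex.ofReal).mulVec v := Matrix.mulVec_smul _ _ _
  set C : Matrix (Fin n) (Fin n) ℂ :=
    (lam - 1 + (ω : ℂ)) • T' - (lam * (ω : ℂ)) • E' - (ω : ℂ) • F' with hC
  have hCeq : C = lam • (X.map Complex.ofReal) - ((1 - ω) • T + ω • F).map Complex.ofReal := by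
    ext i j
    simp only [hC, hX, hT', hE', hF', Matrix.sub_apply, Matrix.add_apply, Matrix.smul_apply,
      Matrix.map_apply, smul_eq_mul]
    push_cast
    ring
  have hCv : C.mulVec v = 0 := by
    rw [hCeq, Matrix.sub_mulVec, Matrix.smul_mulVec, h2, sub_self]
  -- norm estimates
  set c : ℝ := ‖lam - 1 + (ω : ℂ)‖ with hc
  have habslam : ‖lam‖ = ‖lam‖ := rfl
  have hc1 : ‖lam‖ * ω ≤ c := by
    have hnn : ‖lam‖ - (1 - ω) ≤ ‖lam - ((1 : ℂ) - (ω : ℂ))‖ := by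
      have h := norm_sub_norm_le lam ((1 : ℂ) - (ω : ℂ))
      have : ‖(1 : ℂ) - (ω : ℂ)‖ = 1 - ω := by
        rw [show (1 : ℂ) - (ω : ℂ) = ((1 - ω : ℝ) : ℂ) by push_cast; ring,
          Complex.norm_real, Real.norm_eq_abs, abs_of_nonneg (by linarith)]
      linarith [h, this.le, this.ge]
    have heq : c = ‖lam - ((1 : ℂ) - (ω : ℂ))‖ := by
      rw [hc]; congr 1; ring
    rw [habslam]
    rw [habslam] at hlam
    nlinarith [hnn, heq]
  have hωc : ω ≤ c := by
    have : ω ≤ ‖lam‖ * ω := by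
      nlinarith [hlam]
    linarith [hc1]
  have hcpos : 0 < c := lt_of_lt_of_le hω0 hωc
  -- SDD of C
  have hCdom : ∀ i, ∑ j ∈ Finset.univ.erase i, ‖C i j‖ * u j < ‖C i i‖ * u i := by
    intro i
    have hdiag : ‖C i i‖ = c * |A i i| := by
      simp only [hC, hT', hE', hF', Matrix.sub_apply, Matrix.smul_apply, Matrix.map_apply,
        hTd i, hEd i, hFd i, smul_eq_mul]
      push_cast
      rw [show (lam - 1 + (ω : ℂ)) * (A i i : ℂ) - lam * (ω : ℂ) * 0 - (ω : ℂ) * 0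
        = (lam - 1 + (ω : ℂ)) * (A i i : ℂ) by ring]
      rw [norm_mul, Complex.norm_real, Real.norm_eq_abs, hc]
    calc ∑ j ∈ Finset.univ.erase i, ‖C i j‖ * u j
        ≤ ∑ j ∈ Finset.univ.erase i, c * (|A i j| * u j) := by
          apply Finset.sum_le_sum
          intro j hj
          rw [← mul_assoc]
          apply mul_le_mul_of_nonneg_right _ (hupos j).le
          simp only [hC, hT', hE', hF', Matrix.sub_apply, Matrix.smul_apply, Matrix.map_apply,
            smul_eq_mul, hT i j, hE i j, hF i j]
          by_cases hb : |(i : ℤ) - (j : ℤ)| ≤ (m : ℤ)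
          · rw [if_pos hb, if_neg (by rw [abs_le] at hb; omega),
              if_neg (by rw [abs_le] at hb; omega)]
            rw [show (lam - 1 + (ω : ℂ)) * (A i j : ℂ) - lam * (ω : ℂ) * ((0 : ℝ) : ℂ)
              - (ω : ℂ) * ((0 : ℝ) : ℂ) = (lam - 1 + (ω : ℂ)) * (A i j : ℂ) by push_cast; ring]
            rw [norm_mul, Complex.norm_real, Real.norm_eq_abs, hc]
          · rw [if_neg hb, abs_le] at *
            by_cases hc2 : (j : ℤ) + (m : ℤ) < (i : ℤ)
            · rw [if_pos hc2, if_neg (by omega)]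
              rw [show (lam - 1 + (ω : ℂ)) * ((0 : ℝ) : ℂ) - lam * (ω : ℂ) * ((-A i j : ℝ) : ℂ)
                - (ω : ℂ) * ((0 : ℝ) : ℂ) = lam * (ω : ℂ) * (A i j : ℂ) by push_cast; ring]
              rw [norm_mul, norm_mul, Complex.norm_real, Complex.norm_real,
                Real.norm_eq_abs, Real.norm_eq_abs, abs_of_pos hω0]
              rw [habslam] at hc1
              nlinarith [abs_nonneg (A i j), hc1, norm_nonneg lam]
            · rw [if_neg hc2, if_pos (by omega)]
              rw [show (lam - 1 + (ω : ℂ)) * ((0 : ℝ) : ℂ) - lam * (ω : ℂ) * ((0 : ℝ) : ℂ)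
                - (ω : ℂ) * ((-A i j : ℝ) : ℂ) = (ω : ℂ) * (A i j : ℂ) by push_cast; ring]
              rw [norm_mul, Complex.norm_real, Complex.norm_real,
                Real.norm_eq_abs, Real.norm_eq_abs, abs_of_pos hω0]
              nlinarith [abs_nonneg (A i j), hωc]
      _ = c * ∑ j ∈ Finset.univ.erase i, |A i j| * u j := by rw [Finset.mul_sum]
      _ < c * (|A i i| * u i) := by exact mul_lt_mul_of_pos_left (hdomA i) hcpos
      _ = ‖C i i‖ * u i := by rw [hdiag, mul_assoc]
  exact hv0 (sdd_mulVec_eq_zero C u hupos hCdom v hCv)
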